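/- Let L be a countable first-order language consisting only of function symbols, and let X be a metrizable topological space of weight κ ≥ ℵ₀ equipped with an L-structure in which the interpretation of every function symbol of L is a continuous function on the corresponding finite power of X. Let 𝓔s be a set of equations in L, i.e. pairs (t₁, t₂) of L-terms in a common finite tuple of variables (x₁,…,xₘ). Call a subset S ⊆ X 𝓔s-independent if for every equation (t₁, t₂) ∈ 𝓔s and all pairwise distinct s₁,…,sₘ ∈ S one has t₁(s₁,…,sₘ) ≠ t₂(s₁,…,sₘ) (realizations of the terms in the structure X). If X is completely metrizable, then exactly one of the following holds: (S) there exists an ordinal γ < κ⁺ such that the γ-th Cantor–Bendixson derivative of every 𝓔s-independent subset of X is empty; (P) there exists a perfect 𝓔s-independent subset of X. -/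

import Mathlib

open Set Filter Cardinal FirstOrder

universe u v

/-- A topological space is completely metrizable if its topology is induced by a complete metric. -/
def CompletelyMetrizable (Y : Type*) [t : TopologicalSpace Y] : Prop :=
  ∃ m : MetricSpace Y, m.toUniformSpace.toTopologicalSpace = t ∧ @CompleteSpace Y m.toUniformSpace

/-- The weight of a topological space: the least cardinality of a topological basis. -/
noncomputable def topWeight (X : Type u) [TopologicalSpace X] : Cardinal.{u} :=
  ⨅ B : { B : Set (Set X) // TopologicalSpace.IsTopologicalBasis B }, Cardinal.mk B.1

/-- A set is dense-in-itself if it is nonempty and has no isolated points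
(in the subspace topology). -/
def DenseInItselfSet {X : Type*} [TopologicalSpace X] (S : Set X) : Prop :=
  S.Nonempty ∧ ∀ x ∈ S, AccPt x (𝓟 S)

/-- A set is perfect if it is nonempty, completely metrizable in the subspace topology,
and has no isolated points. -/
def IsPerfectSet {X : Type*} [TopologicalSpace X] (P : Set X) : Prop :=
  P.Nonempty ∧ CompletelyMetrizable P ∧ ∀ x ∈ P, AccPt x (𝓟 P)

/-- The `γ`-th Cantor–Bendixson derivative of a set: iterate the operation of removing
isolated points, taking intersections at limit stages. -/
noncomputable def cbDeriv {X : Type u} [TopologicalSpace X] (A : Set X) (γ : Ordinal.{v}) :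
    Set X :=
  Ordinal.limitRecOn γ A (fun _ ih => { x ∈ ih | AccPt x (𝓟 ih) })
    (fun o _ ih => ⋂ (o' : Ordinal.{v}) (h : o' < o), ih o' h)

/-- `S` is independent with respect to a set `E` of equations (pairs of terms)
in the language `L`. -/
def EqIndependent {L : FirstOrder.Language} {X : Type*} [L.Structure X]
    (E : Set (Σ m : ℕ, L.Term (Fin m) × L.Term (Fin m))) (S : Set X) : Prop :=
  ∀ e ∈ E, ∀ s : Fin e.1 → X, (∀ i, s i ∈ S) → Function.Injective s →
    e.2.1.realize s ≠ e.2.2.realize s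

open Topology Metric

section CB
variable {X : Type u} [TopologicalSpace X] {A B : Set X}

@[simp] lemma cbDeriv_zero (A : Set X) : cbDeriv A (0 : Ordinal.{v}) = A :=
  Ordinal.limitRecOn_zero ..

lemma cbDeriv_succ (A : Set X) (γ : Ordinal.{v}) :
    cbDeriv A (Order.succ γ) = { x ∈ cbDeriv A γ | AccPt x (𝓟 (cbDeriv A γ)) } :=
  Ordinal.limitRecOn_succ ..

lemma cbDeriv_limit (A : Set X) {γ : Ordinal.{v}} (h : Order.IsSuccLimit γ) :
    cbDeriv A γ = ⋂ (o' : Ordinal.{v}) (_ : o' < γ), cbDeriv A o' :=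
  Ordinal.limitRecOn_limit _ _ _ _ h

lemma cbDeriv_anti (A : Set X) {γ γ' : Ordinal.{v}} (h : γ ≤ γ') :
    cbDeriv A γ' ⊆ cbDeriv A γ := by
  induction γ' using Ordinal.induction with
  | h γ' ih =>
    rcases eq_or_lt_of_le h with rfl | hlt
    · exact subset_rfl
    rcases Ordinal.zero_or_succ_or_isSuccLimit γ' with rfl | ⟨δ, rfl⟩ | hl
    · exact absurd hlt (not_lt_zero (a := γ))
    · rw [cbDeriv_succ]
      exact (sep_subset _ _).trans (ih δ (Order.lt_succ δ) (Order.lt_succ_iff.mp hlt))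
    · rw [cbDeriv_limit A hl]
      exact iInter₂_subset γ hlt

lemma cbDeriv_subset (A : Set X) (γ : Ordinal.{v}) : cbDeriv A γ ⊆ A := by
  simpa using cbDeriv_anti A (zero_le : (0:Ordinal.{v}) ≤ γ)

lemma cbDeriv_mono (h : A ⊆ B) (γ : Ordinal.{v}) : cbDeriv A γ ⊆ cbDeriv B γ := by
  induction γ using Ordinal.induction with
  | h γ ih =>
    rcases Ordinal.zero_or_succ_or_isSuccLimit γ with rfl | ⟨δ, rfl⟩ | hl
    · simpa using h
    · rw [cbDeriv_succ, cbDeriv_succ]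
      rintro x ⟨hx1, hx2⟩
      exact ⟨ih δ (Order.lt_succ δ) hx1,
        hx2.mono (principal_mono.mpr (ih δ (Order.lt_succ δ)))⟩
    · rw [cbDeriv_limit A hl, cbDeriv_limit B hl]
      exact iInter₂_mono fun o' ho' => ih o' ho'

lemma cbDeriv_of_dense_in_itself (h : ∀ x ∈ A, AccPt x (𝓟 A)) (γ : Ordinal.{v}) :
    cbDeriv A γ = A := by
  induction γ using Ordinal.induction with
  | h γ ih =>
    rcases Ordinal.zero_or_succ_or_isSuccLimit γ with rfl | ⟨δ, rfl⟩ | hl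
    · simp
    · rw [cbDeriv_succ, ih δ (Order.lt_succ δ)]
      exact Set.ext fun x => ⟨fun hx => hx.1, fun hx => ⟨hx, h x hx⟩⟩
    · rw [cbDeriv_limit A hl]
      apply Set.Subset.antisymm
      · intro x hx
        have := mem_iInter₂.mp hx 0 hl.pos
        simpa using this
      · exact subset_iInter₂ fun o' ho' => by rw [ih o' ho']

lemma accPt_inter_open {x : X} {U : Set X} (hU : IsOpen U) (hx : x ∈ U)
    (h : AccPt x (𝓟 A)) : AccPt x (𝓟 (A ∩ U)) := by
  have hUn : U ∈ 𝓝[≠] x := mem_nhdsWithin_of_mem_nhds (hU.mem_nhds hx)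
  unfold AccPt at h ⊢
  have key : 𝓝[≠] x ⊓ 𝓟 U = 𝓝[≠] x := inf_eq_left.mpr (le_principal_iff.mpr hUn)
  rw [← inf_principal, inf_comm (𝓟 A) (𝓟 U), ← inf_assoc, key]
  exact h

lemma cbDeriv_inter_open {U : Set X} (hU : IsOpen U) (γ : Ordinal.{v}) :
    cbDeriv A γ ∩ U ⊆ cbDeriv (A ∩ U) γ := by
  induction γ using Ordinal.induction with
  | h γ ih =>
    rcases Ordinal.zero_or_succ_or_isSuccLimit γ with rfl | ⟨δ, rfl⟩ | hl
    · simp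
    · rw [cbDeriv_succ, cbDeriv_succ]
      rintro x ⟨⟨hx1, hx2⟩, hxU⟩
      refine ⟨ih δ (Order.lt_succ δ) ⟨hx1, hxU⟩, ?_⟩
      exact (accPt_inter_open hU hxU hx2).mono
        (principal_mono.mpr (ih δ (Order.lt_succ δ)))
    · rw [cbDeriv_limit A hl, cbDeriv_limit (A ∩ U) hl]
      rintro x ⟨hx, hxU⟩
      simp only [mem_iInter] at hx ⊢
      exact fun o' ho' => ih o' ho' ⟨hx o' ho', hxU⟩
end CB

lemma continuous_term_realize {L : Language} {X : Type u} [TopologicalSpace X] [L.Structure X]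
    (hcont : ∀ (n : ℕ) (f : L.Functions n),
      Continuous fun v : Fin n → X => Language.Structure.funMap f v)
    {α : Type*} [Fintype α] (t : L.Term α) :
    Continuous fun v : α → X => t.realize v := by
  induction t with
  | var k => exact continuous_apply k
  | func f ts ih =>
    simp only [Language.Term.realize]
    exact (hcont _ f).comp (continuous_pi fun i => ih i)

lemma pigeonhole_ord {κ : Cardinal.{u}} (hκ : ℵ₀ ≤ κ) {ι : Type u} (hι : #ι ≤ κ)
    (P : ι → Ordinal.{u} → Prop)
    (hanti : ∀ i γ γ', γ ≤ γ' → P i γ' → P i γ)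
    (hex : ∀ γ < (Order.succ κ).ord, ∃ i, P i γ) :
    ∃ i, ∀ γ < (Order.succ κ).ord, P i γ := by
  have h0 : (0 : Ordinal) < (Order.succ κ).ord := by
    rw [Cardinal.lt_ord, Ordinal.card_zero]
    exact lt_of_le_of_lt κ.zero_le (Order.lt_succ κ)
  by_contra hcon
  push_neg at hcon
  choose g hg1 hg2 using hcon
  haveI : Nonempty ι := (hex 0 h0).elim fun i _ => ⟨i⟩
  have hsup : (⨆ i, g i) < (Order.succ κ).ord :=
    Ordinal.iSup_lt_ord
      (by rw [(isRegular_succ hκ).cof_eq]; exact hι.trans_lt (Order.lt_succ κ)) hg1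
  obtain ⟨i, hi⟩ := hex _ hsup
  exact hg2 i (hanti i (g i) _ (le_ciSup (Ordinal.bddAbove_range g) i) hi)

section Construction
variable {L : FirstOrder.Language} {X : Type u} [MetricSpace X] [L.Structure X]

/-- equation-avoidance condition at level `n`. -/
def EqCond (E : Set (Σ m : ℕ, L.Term (Fin m) × L.Term (Fin m)))
    (g : ℕ → Σ m : ℕ, L.Term (Fin m) × L.Term (Fin m))
    (n : ℕ) (G : (Fin n → Bool) → Set X) : Prop :=
  ∀ k < n, g k ∈ E → ∀ σ : Fin (g k).1 → (Fin n → Bool), Function.Injective σ →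
    ∀ v : Fin (g k).1 → X, (∀ i, v i ∈ closure (G (σ i))) →
      (g k).2.1.realize v ≠ (g k).2.2.realize v

def ClDisj {n : ℕ} (G : (Fin n → Bool) → Set X) : Prop :=
  ∀ s t, s ≠ t → closure (G s) ∩ closure (G t) = ∅

def SmallDiam (n : ℕ) (G : (Fin n → Bool) → Set X) : Prop :=
  n ≠ 0 → ∀ s, ∀ x ∈ G s, ∀ y ∈ G s, dist x y ≤ (2⁻¹ : ℝ) ^ n

def LinkCond {n : ℕ} (G : (Fin n → Bool) → Set X) (G' : (Fin (n+1) → Bool) → Set X) : Prop :=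
  ∀ s, closure (G' s) ⊆ G (s ∘ Fin.castSucc)

lemma step_candidate
    (hcont : ∀ (n : ℕ) (f : L.Functions n),
      Continuous fun v : Fin n → X => FirstOrder.Language.Structure.funMap f v)
    {E : Set (Σ m : ℕ, L.Term (Fin m) × L.Term (Fin m))}
    (g : ℕ → Σ m : ℕ, L.Term (Fin m) × L.Term (Fin m))
    {B : Set (Set X)} (hB : TopologicalSpace.IsTopologicalBasis B)
    (n : ℕ) (G : (Fin n → Bool) → Set X) (hGB : ∀ s, G s ∈ B) (hGd : ClDisj G)
    (γ : Ordinal.{v}) (S : Set X) (hS : EqIndependent E S)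
    (hSx : ∀ s, (cbDeriv S (Order.succ γ) ∩ G s).Nonempty) :
    ∃ G' : (Fin (n+1) → Bool) → Set X,
      (∀ s, G' s ∈ B) ∧ ClDisj G' ∧ SmallDiam (n+1) G' ∧ EqCond E g (n+1) G' ∧
      LinkCond G G' ∧ (∀ s, (cbDeriv S γ ∩ G' s).Nonempty) := by
  choose x hx using hSx
  have hx1 : ∀ s, x s ∈ cbDeriv S γ ∧ AccPt (x s) (𝓟 (cbDeriv S γ)) := by
    intro s
    have := (hx s).1
    rwa [cbDeriv_succ] at this
  have hy : ∀ s, ∃ y, (y ∈ G s ∩ cbDeriv S γ) ∧ y ≠ x s := by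
    intro s
    exact (accPt_iff_nhds.mp (hx1 s).2) (G s)
      ((hB.isOpen (hGB s)).mem_nhds (hx s).2)
  choose y hy1 hy2 using hy
  set par : (Fin (n+1) → Bool) → (Fin n → Bool) := fun s' => s' ∘ Fin.castSucc with hpar
  set p : (Fin (n+1) → Bool) → X :=
    fun s' => if s' (Fin.last n) then y (par s') else x (par s') with hp
  have hpd : ∀ s', p s' ∈ cbDeriv S γ := by
    intro s'
    by_cases h : s' (Fin.last n) <;> simp only [hp, h, if_true, if_false, ite_true, ite_false]
    · exact (hy1 _).2
    · exact (hx1 _).1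
  have hpG : ∀ s', p s' ∈ G (par s') := by
    intro s'
    by_cases h : s' (Fin.last n) <;> simp only [hp, h, ite_true, ite_false]
    · exact (hy1 _).1
    · exact (hx _).2
  have hpS : ∀ s', p s' ∈ S := fun s' => cbDeriv_subset S γ (hpd s')
  have hpinj : Function.Injective p := by
    intro s' t' hpe
    have hpp : par s' = par t' := by
      by_contra hne
      have := hGd _ _ hne
      have h1 : p s' ∈ closure (G (par s')) := subset_closure (hpG s')
      have h2 : p s' ∈ closure (G (par t')) := hpe ▸ subset_closure (hpG t')
      exact absurd (Set.eq_empty_iff_forall_notMem.mp this (p s')) (by simp [h1, h2])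
    have hlast : s' (Fin.last n) = t' (Fin.last n) := by
      by_contra hne
      rcases Bool.eq_false_or_eq_true (s' (Fin.last n)) with h1 | h1 <;>
        rcases Bool.eq_false_or_eq_true (t' (Fin.last n)) with h2 | h2 <;>
          simp [h1, h2] at hne ⊢
      · have h3 : y (par t') = x (par t') := by simpa [hp, h1, h2, hpp] using hpe
        exact (hy2 (par t')) h3
      · have h3 : y (par t') = x (par t') := by simpa [hp, h1, h2, hpp] using hpe.symm
        exact (hy2 (par t')) h3
    funext i
    refine Fin.lastCases ?_ ?_ i
    · exact hlast
    · intro j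
      have := congrFun hpp j
      simpa [hpar] using this
  -- choose a good radius r
  have ev_lt : ∀ c : ℝ, 0 < c → ∀ᶠ r in 𝓝[>] (0:ℝ), r < c := fun c hc =>
    eventually_nhdsWithin_of_eventually_nhds (gt_mem_nhds hc)
  have ev0 : ∀ᶠ r in 𝓝[>] (0:ℝ), 0 < r := eventually_mem_nhdsWithin
  have ev2 : ∀ᶠ r in 𝓝[>] (0:ℝ), 2*r ≤ (2⁻¹:ℝ)^(n+1) :=
    (ev_lt ((2⁻¹:ℝ)^(n+1)/2) (by positivity)).mono fun r hr => by linarith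
  have ev3 : ∀ᶠ r in 𝓝[>] (0:ℝ), ∀ s' t', s' ≠ t' → 2*r < dist (p s') (p t') :=
    eventually_all.2 fun s' => eventually_all.2 fun t' => by
      by_cases h : s' = t'
      · exact Eventually.of_forall fun r hne => absurd h hne
      · have hd : 0 < dist (p s') (p t') := dist_pos.mpr fun he => h (hpinj he)
        exact (ev_lt (dist (p s') (p t')/2) (by linarith)).mono fun r hr _ => by linarith
  have ev4 : ∀ᶠ r in 𝓝[>] (0:ℝ), ∀ s', closedBall (p s') r ⊆ G (par s') :=
    eventually_all.2 fun s' => by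
      obtain ⟨ε, hε, hball⟩ := Metric.isOpen_iff.mp (hB.isOpen (hGB (par s'))) _ (hpG s')
      exact (ev_lt ε hε).mono fun r hr => (closedBall_subset_ball hr).trans hball
  have ev5 : ∀ᶠ r in 𝓝[>] (0:ℝ), ∀ k : Fin (n+1), ∀ σ : Fin (g k.val).1 → (Fin (n+1) → Bool),
      g k.val ∈ E → Function.Injective σ → ∀ v : Fin (g k.val).1 → X,
      (∀ i, dist (v i) (p (σ i)) ≤ r) →
      (g k.val).2.1.realize v ≠ (g k.val).2.2.realize v := by
    refine eventually_all.2 fun k => eventually_all.2 fun σ => ?_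
    by_cases hkE : g k.val ∈ E
    · by_cases hσ : Function.Injective σ
      · have hne : (g k.val).2.1.realize (p ∘ σ) ≠ (g k.val).2.2.realize (p ∘ σ) :=
          hS _ hkE (p ∘ σ) (fun i => hpS _) (hpinj.comp hσ)
        have hO : IsOpen {v : Fin (g k.val).1 → X |
            (g k.val).2.1.realize v ≠ (g k.val).2.2.realize v} :=
          isOpen_ne_fun (continuous_term_realize hcont _) (continuous_term_realize hcont _)
        obtain ⟨ε, hε, hball⟩ := Metric.isOpen_iff.mp hO _ hne
        refine (ev_lt ε hε).mono fun r hr _ _ v hv => hball ?_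
        rw [mem_ball]
        exact (dist_pi_lt_iff hε).2 fun i => lt_of_le_of_lt (hv i) hr
      · exact Eventually.of_forall fun r _ h => absurd h hσ
    · exact Eventually.of_forall fun r h => absurd h hkE
  obtain ⟨r, hr0, hr2, hr3, hr4, hr5⟩ :=
    (ev0.and (ev2.and (ev3.and (ev4.and ev5)))).exists
  have hW : ∀ s', ∃ W ∈ B, p s' ∈ W ∧ W ⊆ ball (p s') r := fun s' =>
    hB.exists_subset_of_mem_open (mem_ball_self hr0) isOpen_ball
  choose W hWB hWp hWb using hW
  have hWcl : ∀ s', closure (W s') ⊆ closedBall (p s') r := fun s' =>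
    (closure_mono (hWb s')).trans closure_ball_subset_closedBall
  refine ⟨W, hWB, ?_, ?_, ?_, ?_, fun s' => ⟨p s', hpd s', hWp s'⟩⟩
  · intro s' t' hne
    rw [Set.eq_empty_iff_forall_notMem]
    rintro z ⟨h1, h2⟩
    have d1 : dist z (p s') ≤ r := mem_closedBall.mp (hWcl s' h1)
    have d2 : dist z (p t') ≤ r := mem_closedBall.mp (hWcl t' h2)
    have d3 := hr3 s' t' hne
    have d4 : dist (p s') (p t') ≤ dist (p s') z + dist z (p t') := dist_triangle _ _ _
    rw [dist_comm (p s') z] at d4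
    linarith
  · intro _ s' a ha b hb
    have ha' : dist a (p s') < r := mem_ball.mp (hWb s' ha)
    have hb' : dist b (p s') < r := mem_ball.mp (hWb s' hb)
    have d4 : dist a b ≤ dist a (p s') + dist (p s') b := dist_triangle _ _ _
    rw [dist_comm (p s') b] at d4
    linarith
  · intro k hk hkE σ hσ v hv
    exact hr5 ⟨k, hk⟩ σ hkE hσ v fun i => mem_closedBall.mp (hWcl (σ i) (hv i))
  · intro s'
    exact (hWcl s').trans (hr4 s')

def FullInv (E : Set (Σ m : ℕ, L.Term (Fin m) × L.Term (Fin m)))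
    (g : ℕ → Σ m : ℕ, L.Term (Fin m) × L.Term (Fin m))
    (κ : Cardinal.{u}) (B : Set (Set X)) (n : ℕ) (G : (Fin n → Bool) → Set X) : Prop :=
  (∀ s, G s ∈ B) ∧ ClDisj G ∧ SmallDiam n G ∧ EqCond E g n G ∧
  (∀ γ : Ordinal.{u}, γ < (Order.succ κ).ord →
    ∃ S, EqIndependent E S ∧ ∀ s, (cbDeriv S γ ∩ G s).Nonempty)

lemma step_full
    (hcont : ∀ (n : ℕ) (f : L.Functions n),
      Continuous fun v : Fin n → X => FirstOrder.Language.Structure.funMap f v)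
    {E : Set (Σ m : ℕ, L.Term (Fin m) × L.Term (Fin m))}
    (g : ℕ → Σ m : ℕ, L.Term (Fin m) × L.Term (Fin m))
    {κ : Cardinal.{u}} (hκ : ℵ₀ ≤ κ)
    {B : Set (Set X)} (hB : TopologicalSpace.IsTopologicalBasis B) (hBκ : #B ≤ κ)
    (n : ℕ) (G : (Fin n → Bool) → Set X) (hG : FullInv E g κ B n G) :
    ∃ G', FullInv E g κ B (n+1) G' ∧ LinkCond G G' := by
  obtain ⟨hGB, hGd, _, _, hGl⟩ := hG
  have hι : #((Fin (n+1) → Bool) → (B : Set (Set X))) ≤ κ := by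
    rw [Cardinal.mk_arrow]
    have h1 : Cardinal.lift.{u,0} #(Fin (n+1) → Bool) = ((2^(n+1) : ℕ) : Cardinal) := by
      rw [Cardinal.mk_fintype, Cardinal.lift_natCast]
      norm_num
    rw [h1, Cardinal.lift_uzero, Cardinal.power_natCast]
    calc #↥B ^ (2^(n+1)) ≤ κ ^ (2^(n+1)) := pow_le_pow_left₀ zero_le hBκ _
      _ = κ := power_nat_eq hκ Nat.one_le_two_pow
  obtain ⟨i, hi⟩ := pigeonhole_ord hκ hι
    (fun i γ => (ClDisj (fun s => (i s : Set X)) ∧ SmallDiam (n+1) (fun s => (i s : Set X)) ∧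
        EqCond E g (n+1) (fun s => (i s : Set X)) ∧ LinkCond G (fun s => (i s : Set X))) ∧
      ∃ S, EqIndependent E S ∧ ∀ s, (cbDeriv S γ ∩ (i s : Set X)).Nonempty)
    (fun i γ γ' hle ⟨hst, S, hS, hSne⟩ =>
      ⟨hst, S, hS, fun s => ((hSne s).mono (inter_subset_inter_left _ (cbDeriv_anti S hle)))⟩)
    (by
      intro γ hγ
      have hsucc : Order.succ γ < (Order.succ κ).ord :=
        (Cardinal.isSuccLimit_ord (hκ.trans (Order.le_succ κ))).succ_lt hγ
      obtain ⟨S, hS, hSx⟩ := hGl _ hsucc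
      obtain ⟨G', hG'B, hG'd, hG'diam, hG'eq, hG'link, hG'ne⟩ :=
        step_candidate hcont g hB n G hGB hGd γ S hS hSx
      exact ⟨fun s => ⟨G' s, hG'B s⟩, ⟨hG'd, hG'diam, hG'eq, hG'link⟩, S, hS, hG'ne⟩)
  have h0 : (0 : Ordinal.{u}) < (Order.succ κ).ord := by
    rw [Cardinal.lt_ord, Ordinal.card_zero]
    exact lt_of_le_of_lt κ.zero_le (Order.lt_succ κ)
  obtain ⟨⟨hd, hdiam, heq, hlink⟩, _⟩ := hi 0 h0
  exact ⟨fun s => (i s : Set X), ⟨fun s => (i s).2, hd, hdiam, heq,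
    fun γ hγ => (hi γ hγ).2⟩, hlink⟩

lemma dist_le_of_closure {A : Set X} {c : ℝ} (hc : 0 ≤ c)
    (h : ∀ x ∈ A, ∀ y ∈ A, dist x y ≤ c) :
    ∀ x ∈ closure A, ∀ y ∈ closure A, dist x y ≤ c := by
  rcases A.eq_empty_or_nonempty with rfl | hA
  · simp
  have hb : Bornology.IsBounded A := Metric.isBounded_iff.mpr ⟨c, fun {x} hx {y} hy => h x hx y hy⟩
  intro x hx y hy
  have hd := Metric.dist_le_diam_of_mem hb.closure hx hy
  rw [Metric.diam_closure] at hd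
  exact hd.trans (Metric.diam_le_of_forall_dist_le hc h)

lemma exists_perfect_indep [CompleteSpace X] [Countable (Σ n, L.Functions n)]
    (hcont : ∀ (n : ℕ) (f : L.Functions n),
      Continuous fun v : Fin n → X => FirstOrder.Language.Structure.funMap f v)
    (E : Set (Σ m : ℕ, L.Term (Fin m) × L.Term (Fin m)))
    {κ : Cardinal.{u}} (hκ : ℵ₀ ≤ κ)
    {B : Set (Set X)} (hB : TopologicalSpace.IsTopologicalBasis B) (hBκ : #B ≤ κ)
    {U₀ : Set X} (hU₀ : U₀ ∈ B)
    (hlarge : ∀ γ : Ordinal.{u}, γ < (Order.succ κ).ord →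
      ∃ S, EqIndependent E S ∧ (cbDeriv S γ ∩ U₀).Nonempty) :
    ∃ P : Set X, IsPerfectSet P ∧ EqIndependent E P := by
  -- enumeration of equations
  haveI : Nonempty (Σ m : ℕ, L.Term (Fin m) × L.Term (Fin m)) :=
    ⟨⟨1, FirstOrder.Language.Term.var 0, FirstOrder.Language.Term.var 0⟩⟩
  obtain ⟨g, hg⟩ := exists_surjective_nat (Σ m : ℕ, L.Term (Fin m) × L.Term (Fin m))
  -- level 0
  have hG0 : FullInv E g κ B 0 (fun _ => U₀) := by
    refine ⟨fun _ => hU₀, fun s t h => absurd (Subsingleton.elim s t) h, fun h => absurd rfl h,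
      fun k hk => absurd hk (by omega), fun γ hγ => ?_⟩
    obtain ⟨S, hS1, hS2⟩ := hlarge γ hγ
    exact ⟨S, hS1, fun _ => hS2⟩
  -- the recursive tree
  choose step hstep1 hstep2 using fun n G hG => step_full hcont g hκ hB hBκ n G hG
  let F : ∀ n, {G : (Fin n → Bool) → Set X // FullInv E g κ B n G} :=
    fun n => Nat.rec ⟨fun _ => U₀, hG0⟩ (fun n p => ⟨step n p.1 p.2, hstep1 n p.1 p.2⟩) n
  set U : ∀ n, (Fin n → Bool) → Set X := fun n => (F n).1 with hU
  have hInv : ∀ n, FullInv E g κ B n (U n) := fun n => (F n).2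
  have hlink : ∀ n, LinkCond (U n) (U (n+1)) := fun n => hstep2 n (F n).1 (F n).2
  have hdisj : ∀ n, ClDisj (U n) := fun n => (hInv n).2.1
  have hdiam : ∀ n, SmallDiam n (U n) := fun n => (hInv n).2.2.1
  have heqc : ∀ n, EqCond E g n (U n) := fun n => (hInv n).2.2.2.1
  have hne : ∀ n s, (U n s).Nonempty := by
    intro n s
    have h0 : (0 : Ordinal.{u}) < (Order.succ κ).ord := by
      rw [Cardinal.lt_ord, Ordinal.card_zero]
      exact lt_of_le_of_lt κ.zero_le (Order.lt_succ κ)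
    obtain ⟨S, _, hS2⟩ := (hInv n).2.2.2.2 0 h0
    exact (hS2 s).mono (inter_subset_right)
  -- closure distance bound
  have hdiamcl : ∀ n, n ≠ 0 → ∀ s, ∀ x ∈ closure (U n s), ∀ y ∈ closure (U n s),
      dist x y ≤ (2⁻¹ : ℝ) ^ n :=
    fun n hn s => dist_le_of_closure (by positivity) (hdiam n hn s)
  -- restriction of branches
  set res : ∀ n, (ℕ → Bool) → (Fin n → Bool) := fun n b i => b i with hres
  have hres_cast : ∀ n b, (res (n+1) b) ∘ Fin.castSucc = res n b := by
    intro n b; funext i; simp [hres]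
  have hchain : ∀ b n, U (n+1) (res (n+1) b) ⊆ U n (res n b) := by
    intro b n
    have := hlink n (res (n+1) b)
    rw [hres_cast] at this
    exact subset_closure.trans this
  have hdescend : ∀ b m n, m ≤ n → U n (res n b) ⊆ U m (res m b) := by
    intro b m n hmn
    induction n, hmn using Nat.le_induction with
    | base => exact subset_rfl
    | succ n hmn ih => exact (hchain b n).trans ih
  -- branch limit points
  choose zf hzf using fun (b : ℕ → Bool) (n : ℕ) => hne n (res n b)
  have hzmem : ∀ b m n, m ≤ n → zf b n ∈ U m (res m b) :=
    fun b m n hmn => hdescend b m n hmn (hzf b n)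
  have hcauchy : ∀ b, CauchySeq (zf b) := by
    intro b
    rw [Metric.cauchySeq_iff']
    intro ε hε
    obtain ⟨N0, hN0⟩ := exists_pow_lt_of_lt_one hε (by norm_num : (2⁻¹ : ℝ) < 1)
    refine ⟨N0 + 1, fun n hn => ?_⟩
    have h1 := hzmem b (N0+1) n hn
    have h2 := hzmem b (N0+1) (N0+1) le_rfl
    have h3 := hdiam (N0+1) (Nat.succ_ne_zero N0) (res (N0+1) b) _ h1 _ h2
    have h4 : (2⁻¹ : ℝ) ^ (N0+1) ≤ (2⁻¹ : ℝ) ^ N0 := by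
      rw [pow_succ]
      nlinarith [pow_pos (by norm_num : (0:ℝ) < 2⁻¹) N0]
    linarith
  choose lim hlim using fun b => cauchySeq_tendsto_of_complete (hcauchy b)
  have hlimmem : ∀ b m, lim b ∈ closure (U m (res m b)) := by
    intro b m
    refine mem_closure_of_tendsto (hlim b) (eventually_atTop.mpr ⟨m, fun n hn => ?_⟩)
    exact hzmem b m n hn
  -- the perfect set
  set P : Set X := ⋂ n, ⋃ s : Fin n → Bool, closure (U n s) with hP
  have hPmem : ∀ b, lim b ∈ P := by
    intro b
    rw [hP, mem_iInter]
    exact fun n => mem_iUnion.mpr ⟨res n b, hlimmem b n⟩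
  -- extension of a node to a branch
  set ext : ∀ n, (Fin n → Bool) → (ℕ → Bool) :=
    fun n s i => if h : i < n then s ⟨i, h⟩ else false with hext
  have hext_res : ∀ n s, res n (ext n s) = s := by
    intro n s; funext i; simp [hres, hext, i.isLt]
  have hnodeP : ∀ n s, ∃ z ∈ P, z ∈ closure (U n s) := by
    intro n s
    refine ⟨lim (ext n s), hPmem _, ?_⟩
    have := hlimmem (ext n s) n
    rwa [hext_res] at this
  -- uniqueness of nodes
  have huniq : ∀ n (x : X) s t, x ∈ closure (U n s) → x ∈ closure (U n t) → s = t := by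
    intro n x s t hs ht
    by_contra hne'
    exact absurd (Set.eq_empty_iff_forall_notMem.mp (hdisj n s t hne') x) (by simp [hs, ht])
  -- node selection for points of P
  have hnode : ∀ x ∈ P, ∀ n, ∃ s, x ∈ closure (U n s) := by
    intro x hx n
    have := mem_iInter.mp hx n
    exact mem_iUnion.mp this
  -- coherence of nodes
  have hcoh : ∀ (x : X) n s', x ∈ closure (U (n+1) s') → x ∈ U n (s' ∘ Fin.castSucc) :=
    fun x n s' hx => hlink n s' hx
  refine ⟨P, ⟨⟨lim (fun _ => false), hPmem _⟩, ?_, ?_⟩, ?_⟩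
  -- completely metrizable
  · have hPclosed : IsClosed P :=
      isClosed_iInter fun n => isClosed_iUnion_of_finite fun s => isClosed_closure
    exact ⟨Subtype.metricSpace, rfl, hPclosed.completeSpace_coe⟩
  -- no isolated points
  · intro x hx
    rw [accPt_iff_nhds]
    intro V hV
    obtain ⟨ε, hε, hball⟩ := Metric.mem_nhds_iff.mp hV
    obtain ⟨n, hn⟩ := exists_pow_lt_of_lt_one hε (by norm_num : (2⁻¹:ℝ) < 1)
    obtain ⟨s', hs'⟩ := hnode x hx (n+1+1)
    set t' : Fin (n+1+1) → Bool := Function.update s' (Fin.last (n+1)) (! s' (Fin.last (n+1)))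
      with ht'
    have hst : s' ≠ t' := by
      intro h
      have := congrFun h (Fin.last (n+1))
      rw [ht', Function.update_self] at this
      exact absurd this (by simp)
    obtain ⟨y, hyP, hyt⟩ := hnodeP (n+1+1) t'
    have hxy : y ≠ x := by
      intro h
      have hmem : x ∈ closure (U (n+1+1) s') ∩ closure (U (n+1+1) t') := ⟨hs', h ▸ hyt⟩
      rw [hdisj (n+1+1) s' t' hst] at hmem
      exact hmem
    have hpar : t' ∘ Fin.castSucc = s' ∘ Fin.castSucc := by
      funext i
      rw [ht']
      exact Function.update_of_ne (Fin.castSucc_lt_last i).ne _ s'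
    have hx1 : x ∈ U (n+1) (s' ∘ Fin.castSucc) := hcoh x (n+1) s' hs'
    have hy1 : y ∈ U (n+1) (s' ∘ Fin.castSucc) := by
      have := hcoh y (n+1) t' hyt
      rwa [hpar] at this
    have hd := hdiam (n+1) (Nat.succ_ne_zero n) _ _ hy1 _ hx1
    refine ⟨y, ⟨hball ?_, hyP⟩, hxy⟩
    rw [mem_ball]
    have h4 : (2⁻¹:ℝ)^(n+1) ≤ 2⁻¹^n := by
      rw [pow_succ]
      nlinarith [pow_pos (by norm_num : (0:ℝ) < 2⁻¹) n]
    linarith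
  -- independence
  · intro e heE v hv hinj
    obtain ⟨k, hk⟩ := hg e
    subst hk
    choose nds hnds using fun i n => hnode (v i) (hv i) n
    have hev1 : ∀ᶠ N in atTop, k < N := eventually_gt_atTop k
    have hev3 : ∀ᶠ N in atTop, ∀ i j : Fin (g k).1, i ≠ j →
        (2⁻¹:ℝ)^N < dist (v i) (v j) := by
      refine eventually_all.2 fun i => eventually_all.2 fun j => ?_
      by_cases hij : i = j
      · exact Eventually.of_forall fun N h => absurd hij h
      · have hdp : 0 < dist (v i) (v j) := dist_pos.mpr fun h => hij (hinj h)
        exact ((tendsto_pow_atTop_nhds_zero_of_lt_one (by norm_num) (by norm_num)).eventually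
          (gt_mem_nhds hdp)).mono fun N h _ => h
    obtain ⟨N, hN1, hN3⟩ := (hev1.and hev3).exists
    have hσinj : Function.Injective (fun i => nds i N) := by
      intro i j hij'
      by_contra hne'
      have h1 := hnds i N
      have h2 := hnds j N
      simp only at hij'
      rw [hij'] at h1
      have hdd := hdiamcl N (by omega) (nds j N) _ h1 _ h2
      exact absurd (hN3 i j hne') (not_lt.mpr (by rw [dist_comm] at hdd ⊢; exact hdd))
    exact heqc N k hN1 heE (fun i => nds i N) hσinj v (fun i => hnds i N)

end Construction

theorem statement5 (L : FirstOrder.Language.{u, u}) (hLrel : ∀ n, IsEmpty (L.Relations n))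
    (hLfun : Countable (Σ n, L.Functions n))
    {X : Type u} [TopologicalSpace X] (hX : CompletelyMetrizable X)
    (κ : Cardinal.{u}) (hκ : ℵ₀ ≤ κ) (hw : topWeight X = κ)
    [M : L.Structure X]
    (hcont : ∀ (n : ℕ) (f : L.Functions n),
      Continuous fun v : Fin n → X => FirstOrder.Language.Structure.funMap f v)
    (E : Set (Σ m : ℕ, L.Term (Fin m) × L.Term (Fin m))) :
    Xor'
      (∃ γ : Ordinal.{u}, γ < (Order.succ κ).ord ∧
        ∀ S : Set X, EqIndependent E S → cbDeriv S γ = ∅)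
      (∃ P : Set X, IsPerfectSet P ∧ EqIndependent E P) := by
  haveI := hLfun
  obtain ⟨m, hm, hc⟩ := hX
  subst hm
  letI : MetricSpace X := m
  haveI : CompleteSpace X := hc
  by_cases hperf : ∃ P : Set X, IsPerfectSet P ∧ EqIndependent E P
  · refine Or.inr ⟨hperf, ?_⟩
    rintro ⟨γ, hγ, hall⟩
    obtain ⟨P, ⟨hPne, _, hPacc⟩, hPind⟩ := hperf
    have h1 := hall P hPind
    rw [cbDeriv_of_dense_in_itself hPacc] at h1
    exact hPne.ne_empty h1
  · refine Or.inl ⟨?_, hperf⟩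
    -- a basis of cardinality κ
    obtain ⟨B, hBbasis, hBcard⟩ :
        ∃ B : Set (Set X), TopologicalSpace.IsTopologicalBasis B ∧ #B = κ := by
      have hne : (Set.range (fun B : { B : Set (Set X) //
          TopologicalSpace.IsTopologicalBasis B } => Cardinal.mk B.1)).Nonempty :=
        ⟨_, ⟨⟨{U | IsOpen U}, TopologicalSpace.isTopologicalBasis_opens⟩, rfl⟩⟩
      have hmem := csInf_mem hne
      have : sInf (Set.range (fun B : { B : Set (Set X) //
          TopologicalSpace.IsTopologicalBasis B } => Cardinal.mk B.1)) = topWeight X := rfl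
      rw [this, hw] at hmem
      obtain ⟨⟨B, hb⟩, hBeq⟩ := hmem
      exact ⟨B, hb, hBeq⟩
    haveI hBne : Nonempty B := Cardinal.mk_ne_zero_iff.mp
      (by rw [hBcard]; intro h; rw [h] at hκ; exact (aleph0_pos.trans_le hκ).false)
    by_contra hS
    push_neg at hS
    -- find a non-small basic set
    have hsmall : ¬ ∀ W : B, ∃ γ, γ < (Order.succ κ).ord ∧
        ∀ S : Set X, EqIndependent E S → cbDeriv S γ ∩ (W : Set X) = ∅ := by
      intro hall
      choose γf hγf1 hγf2 using hall
      have hsup : (⨆ W, γf W) < (Order.succ κ).ord :=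
        Ordinal.iSup_lt_ord
          (by rw [(isRegular_succ hκ).cof_eq, hBcard]; exact Order.lt_succ κ) hγf1
      obtain ⟨S, hSind, hSne⟩ := hS _ hsup
      obtain ⟨x, hx⟩ := hSne
      have hxuniv : x ∈ ⋃₀ B := by rw [hBbasis.sUnion_eq]; trivial
      obtain ⟨W, hWB, hxW⟩ := hxuniv
      have h1 : x ∈ cbDeriv S (γf ⟨W, hWB⟩) ∩ W :=
        ⟨cbDeriv_anti S (le_ciSup (Ordinal.bddAbove_range _) ⟨W, hWB⟩) hx, hxW⟩
      rw [hγf2 ⟨W, hWB⟩ S hSind] at h1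
      exact h1
    push_neg at hsmall
    obtain ⟨W₀, hW₀⟩ := hsmall
    refine absurd (exists_perfect_indep hcont E hκ hBbasis hBcard.le W₀.2
      (fun γ hγ => ?_)) hperf
    obtain ⟨S, hS1, hS2⟩ := hW₀ γ hγ
    exact ⟨S, hS1, hS2⟩
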